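/- arXiv:1211.4053 — 7 statements merged into one kernel-verified Lean document; each statement's English description precedes it below -/
import Mathlib

section
/- Let u₀(P,α) = C(aP) − (1−α)·C(bP) − γP with a,b,γ > 0 and α ∈ [0,1), and define P̂(α) = (b√(1−α) − a)/(a·b·(1 − √(1−α))). Then the second derivative of u₀ with respect to P is nonpositive for P ≥ max(P̂(α),0), i.e., u₀(·,α) is concave on [max(P̂(α),0), ∞). -/
noncomputable def C (x : ℝ) : ℝ := (1/2) * Real.logb 2 (1 + x)

set_option maxHeartbeats 1000000 in
theorem stmt3 (a b γ α : ℝ) (ha : 0 < a) (hb : 0 < b) (hγ : 0 < γ)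
    (hα : α ∈ Set.Ioo (0:ℝ) 1)
    (Phat : ℝ) (hPhat : Phat = (b * Real.sqrt (1 - α) - a) / (a * b * (1 - Real.sqrt (1 - α)))) :
    ConcaveOn ℝ (Set.Ici (max Phat 0))
      (fun P => C (a * P) - (1 - α) * C (b * P) - γ * P) := by
  obtain ⟨hα0, hα1⟩ := hα
  set L := Real.log 2 with hL
  have hLpos : 0 < L := Real.log_pos (by norm_num)
  set M := max Phat 0 with hM
  set f : ℝ → ℝ := fun P => C (a * P) - (1 - α) * C (b * P) - γ * P with hfdef
  set f1 : ℝ → ℝ := fun x => a / (2*L*(1+a*x)) - (1-α) * (b / (2*L*(1+b*x))) - γ with hf1def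
  set f2 : ℝ → ℝ := fun x =>
    -(a^2) / (2*L*(1+a*x)^2) + (1-α) * (b^2 / (2*L*(1+b*x)^2)) with hf2def
  -- positivity of denominators on Ici M
  have hMnn : (0:ℝ) ≤ M := le_max_right _ _
  have hden : ∀ x ∈ Set.Ici M, 0 < 1 + a*x ∧ 0 < 1 + b*x := by
    intro x hx
    have hx0 : (0:ℝ) ≤ x := le_trans hMnn hx
    constructor <;> nlinarith
  -- first derivative
  have key1 : ∀ x : ℝ, 0 < 1 + a*x → 0 < 1 + b*x → HasDerivAt f (f1 x) x := by
    intro x hax hbx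
    have h1 : HasDerivAt (fun y : ℝ => 1 + a*y) a x := by
      simpa using ((hasDerivAt_id x).const_mul a).const_add 1
    have h1b : HasDerivAt (fun y : ℝ => 1 + b*y) b x := by
      simpa using ((hasDerivAt_id x).const_mul b).const_add 1
    have h2 : HasDerivAt (fun y : ℝ => Real.log (1 + a*y)) (a/(1+a*x)) x := by
      simpa [Function.comp_def, inv_mul_eq_div] using (Real.hasDerivAt_log hax.ne').comp x h1
    have h2b : HasDerivAt (fun y : ℝ => Real.log (1 + b*y)) (b/(1+b*x)) x := by
      simpa [Function.comp_def, inv_mul_eq_div] using (Real.hasDerivAt_log hbx.ne').comp x h1b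
    have h3 : HasDerivAt (fun y : ℝ =>
        (1/2) * (Real.log (1 + a*y) / L) - (1-α) * ((1/2) * (Real.log (1 + b*y) / L)) - γ*y)
        ((1/2) * ((a/(1+a*x))/L) - (1-α) * ((1/2) * ((b/(1+b*x))/L)) - γ) x := by
      exact (((h2.div_const L).const_mul (1/2)).sub
        (((h2b.div_const L).const_mul (1/2)).const_mul (1-α))).sub
        (by simpa using (hasDerivAt_id x).const_mul γ)
    have heq : f = fun y : ℝ =>
        (1/2) * (Real.log (1 + a*y) / L) - (1-α) * ((1/2) * (Real.log (1 + b*y) / L)) - γ*y := by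
      funext y; simp [hfdef, C, Real.logb, hL]
    rw [heq]
    convert h3 using 1
    simp only [hf1def]
    field_simp
  -- second derivative
  have key2 : ∀ x : ℝ, 0 < 1 + a*x → 0 < 1 + b*x → HasDerivAt f1 (f2 x) x := by
    intro x hax hbx
    have h1 : HasDerivAt (fun y : ℝ => 2*L*(1+a*y)) (2*L*a) x := by
      have : HasDerivAt (fun y : ℝ => 1 + a*y) a x := by
        simpa using ((hasDerivAt_id x).const_mul a).const_add 1
      simpa [mul_comm] using this.const_mul (2*L)
    have h1b : HasDerivAt (fun y : ℝ => 2*L*(1+b*y)) (2*L*b) x := by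
      have : HasDerivAt (fun y : ℝ => 1 + b*y) b x := by
        simpa using ((hasDerivAt_id x).const_mul b).const_add 1
      simpa [mul_comm] using this.const_mul (2*L)
    have hne : 2*L*(1+a*x) ≠ 0 := by positivity
    have hneb : 2*L*(1+b*x) ≠ 0 := by positivity
    have h2 : HasDerivAt (fun y : ℝ => a / (2*L*(1+a*y)))
        ((0 * (2*L*(1+a*x)) - a * (2*L*a)) / (2*L*(1+a*x))^2) x :=
      (hasDerivAt_const x a).div h1 hne
    have h2b : HasDerivAt (fun y : ℝ => b / (2*L*(1+b*y)))
        ((0 * (2*L*(1+b*x)) - b * (2*L*b)) / (2*L*(1+b*x))^2) x :=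
      (hasDerivAt_const x b).div h1b hneb
    have h3 : HasDerivAt (fun y : ℝ => a / (2*L*(1+a*y)) - (1-α) * (b / (2*L*(1+b*y))) - γ)
        ((0 * (2*L*(1+a*x)) - a * (2*L*a)) / (2*L*(1+a*x))^2 -
          (1-α) * ((0 * (2*L*(1+b*x)) - b * (2*L*b)) / (2*L*(1+b*x))^2) - 0) x :=
      (h2.sub (h2b.const_mul (1-α))).sub (hasDerivAt_const x γ)
    convert h3 using 1
    simp only [hf2def, sub_zero]
    have h4 : (1+a*x) ≠ 0 := hax.ne'
    have h5 : (1+b*x) ≠ 0 := hbx.ne'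
    field_simp
    ring
  -- deriv f = f1 on the good open set
  have hopen : IsOpen {y : ℝ | 0 < 1 + a*y ∧ 0 < 1 + b*y} := by
    exact (isOpen_lt continuous_const (continuous_const.add (continuous_const.mul continuous_id))).inter
      (isOpen_lt continuous_const (continuous_const.add (continuous_const.mul continuous_id)))
  have hderiv1 : ∀ x : ℝ, 0 < 1 + a*x → 0 < 1 + b*x → deriv f x = f1 x := by
    intro x hax hbx; exact (key1 x hax hbx).deriv
  have hderiv2at : ∀ x ∈ Set.Ici M, HasDerivAt (deriv f) (f2 x) x := by
    intro x hx
    obtain ⟨hax, hbx⟩ := hden x hx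
    have hmem : x ∈ {y : ℝ | 0 < 1 + a*y ∧ 0 < 1 + b*y} := ⟨hax, hbx⟩
    have hev : deriv f =ᶠ[nhds x] f1 := by
      filter_upwards [hopen.mem_nhds hmem] with y hy
      exact hderiv1 y hy.1 hy.2
    exact (key2 x hax hbx).congr_of_eventuallyEq hev
  -- sqrt facts
  have hs0 : 0 < Real.sqrt (1 - α) := Real.sqrt_pos.mpr (by linarith)
  have hs1 : Real.sqrt (1 - α) < 1 := by
    nlinarith [Real.sq_sqrt (show (0:ℝ) ≤ 1 - α by linarith), Real.sqrt_nonneg (1 - α)]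
  have hssq : Real.sqrt (1 - α) ^ 2 = 1 - α := Real.sq_sqrt (by linarith)
  set s := Real.sqrt (1 - α) with hsdef
  -- sign of f2
  have hsign : ∀ x ∈ Set.Ici M, f2 x ≤ 0 := by
    intro x hx
    obtain ⟨hax, hbx⟩ := hden x hx
    have hxP : Phat ≤ x := le_trans (le_max_left _ _) hx
    -- from Phat ≤ x derive s*b*(1+a*x) ≤ a*(1+b*x)
    have habs : 0 < a*b*(1-s) := by
      apply mul_pos (mul_pos ha hb); linarith
    have hkey : s*b - a ≤ x * (a*b*(1-s)) := by
      rw [hPhat] at hxP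
      have := (div_le_iff₀ habs).mp (by linarith [hxP] : (b*s - a)/(a*b*(1-s)) ≤ x)
      linarith
    have hlin : s*b*(1+a*x) ≤ a*(1+b*x) := by nlinarith
    have hsq : (1-α) * b^2 * (1+a*x)^2 ≤ a^2 * (1+b*x)^2 := by
      have h1 : 0 ≤ s*b*(1+a*x) := by positivity
      have := mul_self_le_mul_self h1 hlin
      nlinarith [hssq]
    simp only [hf2def]
    have hA : (0:ℝ) < 2*L*(1+a*x)^2 := by positivity
    have hB : (0:ℝ) < 2*L*(1+b*x)^2 := by positivity
    have hdiv : (1-α)*b^2/(2*L*(1+b*x)^2) ≤ a^2/(2*L*(1+a*x)^2) := by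
      rw [div_le_div_iff₀ hB hA]
      nlinarith [hsq, hLpos]
    rw [neg_div, mul_div_assoc']
    linarith
  -- assemble
  apply concaveOn_of_deriv2_nonpos' (convex_Ici M)
  · intro x hx
    obtain ⟨hax, hbx⟩ := hden x hx
    exact (key1 x hax hbx).differentiableAt.differentiableWithinAt
  · intro x hx
    exact (hderiv2at x hx).differentiableAt.differentiableWithinAt
  · intro x hx
    have : deriv (deriv f) x = f2 x := (hderiv2at x hx).deriv
    simp only [Function.iterate_succ, Function.iterate_zero, Function.comp_apply, id_eq]
    rw [this]
    exact hsign x hx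
end

section
/- Fix α ∈ [0,1] and a continuous increasing cost J with J(0) = 0. Let u₀(P) = C(aP) − (1−α)C(bP) − J(P) and u₀'(P) = [C(aP) − (1−α)C(bP)]⁺ − J(P), where [x]⁺ = max(x,0). If P* ∈ [0, Pmax] maximizes u₀ over [0, Pmax], then the point argmax over {0, P*} of u₀' maximizes u₀' over [0, Pmax]; in particular, if u₀(P*) > 0 then P* also maximizes u₀' over [0, Pmax]. -/
theorem stmt5 (a b Pmax α : ℝ) (ha : 0 < a) (hb : 0 < b) (hPmax : 0 < Pmax)
    (hα : α ∈ Set.Icc (0:ℝ) 1)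
    (J : ℝ → ℝ) (hJc : Continuous J) (hJm : Monotone J) (hJ0 : J 0 = 0)
    (u0 u0' : ℝ → ℝ)
    (hu0 : ∀ P, u0 P = C (a * P) - (1 - α) * C (b * P) - J P)
    (hu0' : ∀ P, u0' P = max (C (a * P) - (1 - α) * C (b * P)) 0 - J P)
    (Pstar : ℝ) (hPs : Pstar ∈ Set.Icc 0 Pmax)
    (hmax : ∀ P ∈ Set.Icc 0 Pmax, u0 P ≤ u0 Pstar) :
    ((u0' 0 ≤ u0' Pstar → ∀ P ∈ Set.Icc 0 Pmax, u0' P ≤ u0' Pstar) ∧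
     (u0' Pstar ≤ u0' 0 → ∀ P ∈ Set.Icc 0 Pmax, u0' P ≤ u0' 0)) ∧
    (0 < u0 Pstar → ∀ P ∈ Set.Icc 0 Pmax, u0' P ≤ u0' Pstar) := by
  have hC0 : C 0 = 0 := by simp [C]
  have h0' : u0' 0 = 0 := by
    rw [hu0']
    simp [hC0, hJ0]
  have hle : ∀ P, u0 P ≤ u0' P := by
    intro P
    rw [hu0, hu0']
    have := le_max_left (C (a * P) - (1 - α) * C (b * P)) 0
    linarith
  have key : ∀ P ∈ Set.Icc (0:ℝ) Pmax, u0' P ≤ max (u0' Pstar) (u0' 0) := by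
    intro P hP
    rcases le_or_gt 0 (C (a * P) - (1 - α) * C (b * P)) with h | h
    · have : u0' P = u0 P := by
        rw [hu0, hu0', max_eq_left h]
      rw [this]
      exact le_trans (le_trans (hmax P hP) (hle Pstar)) (le_max_left _ _)
    · have : u0' P = -J P := by
        rw [hu0', max_eq_right h.le]; ring
      rw [this, h0']
      have := hJm hP.1
      rw [hJ0] at this
      have : -J P ≤ 0 := by linarith
      exact le_trans this (le_max_right _ _)
  constructor
  · constructor
    · intro h P hP
      have := key P hP
      rwa [max_eq_left h] at this
    · intro h P hP
      have := key P hP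
      rwa [max_eq_right h] at this
  · intro hpos P hP
    have h1 : 0 < u0' Pstar := lt_of_lt_of_le hpos (hle Pstar)
    have := key P hP
    rw [h0', max_eq_left h1.le] at this
    exact this
end

section
/- Define X(α) = α·a·b − γ̄(a+b) and Y(α) = 4γ̄·a·b·(γ̄ − a + b(1−α)) and P'(α) = (X(α) + √(X(α)² − Y(α)))/(2γ̄ab), for a,b,γ̄ > 0 with X(α)² − Y(α) ≥ 0 on [0,1]. Then P'(α) is (weakly) increasing in α on [0,1]; in particular P'(0) ≤ P'(1). -/
theorem stmt9 (a b γ : ℝ) (ha : 0 < a) (hb : 0 < b) (hγ : 0 < γ)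
    (X Y P' : ℝ → ℝ)
    (hX : ∀ α, X α = α*a*b - γ*(a+b))
    (hY : ∀ α, Y α = 4*γ*a*b*(γ - a + b*(1-α)))
    (hP' : ∀ α, P' α = (X α + Real.sqrt ((X α)^2 - Y α)) / (2*γ*a*b))
    (hdisc : ∀ α ∈ Set.Icc (0:ℝ) 1, 0 ≤ (X α)^2 - Y α) :
    MonotoneOn P' (Set.Icc 0 1) ∧ P' 0 ≤ P' 1 := by
  have hden : (0:ℝ) < 2*γ*a*b := by positivity
  -- Key lemma: sqrt(D α) ≥ -(X α + 2 γ b)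
  have key : ∀ α ∈ Set.Icc (0:ℝ) 1,
      -(X α + 2*γ*b) ≤ Real.sqrt ((X α)^2 - Y α) := by
    intro α hα
    rcases le_or_gt (-(X α + 2*γ*b)) 0 with h | h
    · exact h.trans (Real.sqrt_nonneg _)
    · have hXv := hX α
      have hYv := hY α
      have hα0 := hα.1
      have hα1 := hα.2
      -- X α + 2γb < 0 forces a ≥ b
      have hba : b ≤ a := by
        by_contra hba'
        push_neg at hba'
        nlinarith [mul_nonneg (mul_nonneg hα0 ha.le) hb.le,
          mul_pos hγ (sub_pos.mpr hba')]
      have hid : (X α)^2 - Y α - (X α + 2*γ*b)^2 = 4*γ*a*b*(a-b) := by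
        rw [hXv, hYv]; ring
      have hnn : 0 ≤ 4*γ*a*b*(a-b) :=
        mul_nonneg (by positivity) (by linarith)
      have hD : (X α + 2*γ*b)^2 ≤ (X α)^2 - Y α := by linarith
      calc -(X α + 2*γ*b) = |X α + 2*γ*b| := (abs_of_neg (by linarith)).symm
        _ = Real.sqrt ((X α + 2*γ*b)^2) := (Real.sqrt_sq_eq_abs _).symm
        _ ≤ _ := Real.sqrt_le_sqrt hD
  have mono : MonotoneOn P' (Set.Icc 0 1) := by
    intro x hx y hy hxy
    rw [hP' x, hP' y]
    have hnum : X x + Real.sqrt ((X x)^2 - Y x) ≤ X y + Real.sqrt ((X y)^2 - Y y) := by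
      set sx := Real.sqrt ((X x)^2 - Y x) with hsx
      have hsx2 : sx^2 = (X x)^2 - Y x := Real.sq_sqrt (hdisc x hx)
      have hsxnn : 0 ≤ sx := Real.sqrt_nonneg _
      have hkx : -(X x + 2*γ*b) ≤ sx := key x hx
      rcases le_or_gt (X x + sx) (X y) with h | h
      · exact h.trans (le_add_of_nonneg_right (Real.sqrt_nonneg _))
      · have hd : 0 ≤ a*b*(y - x) := mul_nonneg (by positivity) (by linarith)
        have hXy' : X y = X x + a*b*(y-x) := by rw [hX x, hX y]; ring
        have hYy' : Y y = Y x - 4*γ*b*(a*b*(y-x)) := by rw [hY x, hY y]; ring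
        have hsq : (X x + sx - X y)^2 ≤ (X y)^2 - Y y := by
          rw [hXy', hYy']
          nlinarith [mul_nonneg hd (show (0:ℝ) ≤ sx + X x + 2*γ*b by linarith)]
        have : X x + sx - X y ≤ Real.sqrt ((X y)^2 - Y y) := by
          calc X x + sx - X y ≤ |X x + sx - X y| := le_abs_self _
            _ = Real.sqrt ((X x + sx - X y)^2) := (Real.sqrt_sq_eq_abs _).symm
            _ ≤ _ := Real.sqrt_le_sqrt hsq
        linarith
    exact div_le_div_of_nonneg_right hnum hden.le
  exact ⟨mono, mono (Set.mem_Icc.mpr ⟨le_refl 0, zero_le_one⟩)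
    (Set.mem_Icc.mpr ⟨zero_le_one, le_refl 1⟩) zero_le_one⟩
end

section
/- In the game with u₀(P,α) = C(aP) − (1−α)C(bP) − γP and u₁(P,α) = α(C(cP₁ᵐᵃˣ/(1+aP)) − β), with a ≥ b and threshold Q < P'(0) ≤ P'(1) where P'(α) is the unique maximizer of u₀(·,α): the pair (P'(0), 0) is a Nash equilibrium, and at this equilibrium the secondary user's utility is 0. -/
theorem stmt11 (a b c γ β P1max P0max : ℝ)
    (ha : 0 < a) (hb : 0 < b) (hc : 0 < c) (hγ : 0 < γ) (hβ : 0 < β)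
    (hP1 : 0 < P1max) (hP0max : 0 < P0max) (hab : a ≥ b)
    (u0 u1 : ℝ → ℝ → ℝ)
    (hu0 : ∀ P α, u0 P α = C (a * P) - (1 - α) * C (b * P) - γ * P)
    (hu1 : ∀ P α, u1 P α = α * (C (c * P1max / (1 + a * P)) - β))
    (Q : ℝ) (hQ : Q = (1/a) * (c * P1max / ((2:ℝ) ^ (2*β) - 1) - 1))
    (P' : ℝ → ℝ)
    (hP'mem : ∀ α ∈ Set.Icc (0:ℝ) 1, P' α ∈ Set.Icc 0 P0max)
    (hP'max : ∀ α ∈ Set.Icc (0:ℝ) 1, ∀ P ∈ Set.Icc 0 P0max,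
        P ≠ P' α → u0 P α < u0 (P' α) α)
    (hQlt : Q < P' 0) :
    (∀ P ∈ Set.Icc 0 P0max, u0 P 0 ≤ u0 (P' 0) 0) ∧
    (∀ α ∈ Set.Icc (0:ℝ) 1, u1 (P' 0) α ≤ u1 (P' 0) 0) ∧
    u1 (P' 0) 0 = 0 := by
  have h01 : (0:ℝ) ∈ Set.Icc (0:ℝ) 1 := by constructor <;> norm_num
  have hP0 : 0 ≤ P' 0 := (hP'mem 0 h01).1
  have h1aP : 0 < 1 + a * P' 0 := by positivity
  have hpow : (1:ℝ) < (2:ℝ) ^ (2*β) := by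
    apply Real.one_lt_rpow_iff_of_pos (by norm_num) |>.2
    left; constructor <;> [norm_num; positivity]
  have hpow0 : 0 < (2:ℝ) ^ (2*β) - 1 := by linarith
  -- from hQlt: c*P1max/(2^(2β)-1) - 1 < a * P' 0
  have h2 : c * P1max / ((2:ℝ) ^ (2*β) - 1) - 1 < a * P' 0 := by
    rw [hQ] at hQlt
    have h2' := mul_lt_mul_of_pos_left hQlt ha
    have heq : a * (1/a * (c * P1max / ((2:ℝ) ^ (2*β) - 1) - 1))
        = c * P1max / ((2:ℝ) ^ (2*β) - 1) - 1 := by field_simp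
    linarith
  have h3 : c * P1max / (1 + a * P' 0) < (2:ℝ) ^ (2*β) - 1 := by
    rw [div_lt_iff₀ h1aP]
    have := (div_lt_iff₀ hpow0).1 (by linarith : c * P1max / ((2:ℝ) ^ (2*β) - 1) < 1 + a * P' 0)
    linarith [this]
  have hCle : C (c * P1max / (1 + a * P' 0)) - β ≤ 0 := by
    unfold C
    have hxpos : 0 < c * P1max / (1 + a * P' 0) := by positivity
    have hlog : Real.logb 2 (1 + c * P1max / (1 + a * P' 0)) ≤ Real.logb 2 ((2:ℝ) ^ (2*β)) := by
      apply Real.logb_le_logb_of_le (by norm_num : (1:ℝ) < 2) (by linarith)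
      linarith
    rw [Real.logb_rpow (by norm_num) (by norm_num)] at hlog
    linarith
  refine ⟨?_, ?_, ?_⟩
  · intro P hP
    by_cases h : P = P' 0
    · rw [h]
    · exact le_of_lt (hP'max 0 h01 P hP h)
  · intro α hα
    rw [hu1, hu1]
    have : α * (C (c * P1max / (1 + a * P' 0)) - β) ≤ 0 :=
      mul_nonpos_of_nonneg_of_nonpos hα.1 hCle
    linarith
  · rw [hu1]; ring
end

section
/- In the same game with a ≥ b, if Q > P'(1) then (P'(1), 1) is a Nash equilibrium, and at this point the primary utility equals C(aP'(1)) − γP'(1) (the eavesdropping term vanishes) and the secondary utility is strictly positive. -/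
theorem stmt12 (a b c γ β P1max P0max : ℝ)
    (ha : 0 < a) (hb : 0 < b) (hc : 0 < c) (hγ : 0 < γ) (hβ : 0 < β)
    (hP1 : 0 < P1max) (hP0max : 0 < P0max) (hab : a ≥ b)
    (u0 u1 : ℝ → ℝ → ℝ)
    (hu0 : ∀ P α, u0 P α = C (a * P) - (1 - α) * C (b * P) - γ * P)
    (hu1 : ∀ P α, u1 P α = α * (C (c * P1max / (1 + a * P)) - β))
    (Q : ℝ) (hQ : Q = (1/a) * (c * P1max / ((2:ℝ) ^ (2*β) - 1) - 1))
    (P' : ℝ → ℝ)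
    (hP'mem : ∀ α ∈ Set.Icc (0:ℝ) 1, P' α ∈ Set.Icc 0 P0max)
    (hP'max : ∀ α ∈ Set.Icc (0:ℝ) 1, ∀ P ∈ Set.Icc 0 P0max,
        P ≠ P' α → u0 P α < u0 (P' α) α)
    (hQgt : P' 1 < Q) :
    (∀ P ∈ Set.Icc 0 P0max, u0 P 1 ≤ u0 (P' 1) 1) ∧
    (∀ α ∈ Set.Icc (0:ℝ) 1, u1 (P' 1) α ≤ u1 (P' 1) 1) ∧
    u0 (P' 1) 1 = C (a * P' 1) - γ * P' 1 ∧
    0 < u1 (P' 1) 1 := by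
  have h1mem : (1:ℝ) ∈ Set.Icc (0:ℝ) 1 := by constructor <;> norm_num
  have hP'1 := hP'mem 1 h1mem
  have hP'0 : 0 ≤ P' 1 := hP'1.1
  have hden : (0:ℝ) < 1 + a * P' 1 := by nlinarith
  -- 2^(2β) - 1 > 0
  have h2β : (1:ℝ) < (2:ℝ) ^ (2*β) := by
    have := Real.one_lt_rpow_iff_of_pos (x := 2) (by norm_num) (y := 2*β)
    rw [this]; left; constructor <;> nlinarith
  have hpos : (0:ℝ) < (2:ℝ) ^ (2*β) - 1 := by linarith
  have hkey : 0 < C (c * P1max / (1 + a * P' 1)) - β := by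
    have h1 : 1 + a * P' 1 < c * P1max / ((2:ℝ) ^ (2*β) - 1) := by
      have h := hQgt
      rw [hQ] at h
      have h' := (mul_lt_mul_iff_right₀ ha).mpr h
      rw [show a * (1/a * (c * P1max / ((2:ℝ) ^ (2*β) - 1) - 1))
          = c * P1max / ((2:ℝ) ^ (2*β) - 1) - 1 from by field_simp] at h'
      linarith
    have h2 : ((2:ℝ) ^ (2*β) - 1) * (1 + a * P' 1) < c * P1max := by
      have := (mul_lt_mul_iff_right₀ hpos).mpr h1
      rwa [mul_div_cancel₀ _ (ne_of_gt hpos)] at this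
    have h3 : (2:ℝ) ^ (2*β) - 1 < c * P1max / (1 + a * P' 1) := by
      rw [lt_div_iff₀ hden]; linarith
    have h4 : (2:ℝ) ^ (2*β) < 1 + c * P1max / (1 + a * P' 1) := by linarith
    have h5 : 2 * β < Real.logb 2 (1 + c * P1max / (1 + a * P' 1)) := by
      rw [Real.lt_logb_iff_rpow_lt (by norm_num) (by positivity)]
      exact h4
    simp only [C]
    linarith
  refine ⟨?_, ?_, ?_, ?_⟩
  · intro P hP
    by_cases h : P = P' 1
    · rw [h]
    · exact le_of_lt (hP'max 1 h1mem P hP h)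
  · intro α hα
    rw [hu1, hu1]
    have : α * (C (c * P1max / (1 + a * P' 1)) - β) ≤ 1 * (C (c * P1max / (1 + a * P' 1)) - β) :=
      mul_le_mul_of_nonneg_right hα.2 (le_of_lt hkey)
    linarith
  · rw [hu0]; ring
  · rw [hu1]; linarith
end

section
/- Suppose a < b and Q < 0 (i.e., C(cP₁ᵐᵃˣ) ≤ β is strict: C(cP₁ᵐᵃˣ) < β). Then (P₀, α) = (0, 0) is a Nash equilibrium of the game, and it yields utility 0 to both players. -/
lemma C_mono {x y : ℝ} (hx : 0 ≤ x) (hxy : x ≤ y) : C x ≤ C y := by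
  unfold C
  have : Real.logb 2 (1 + x) ≤ Real.logb 2 (1 + y) :=
    Real.logb_le_logb_of_le (by norm_num) (by linarith) (by linarith)
  linarith

lemma C_zero : C 0 = 0 := by simp [C]

theorem stmt14 (a b c γ β P1max : ℝ)
    (ha : 0 < a) (hb : 0 < b) (hc : 0 < c) (hγ : 0 < γ) (hβ : 0 < β)
    (hP1 : 0 < P1max) (hab : a < b)
    (hQneg : C (c * P1max) < β)
    (u0 u1 : ℝ → ℝ → ℝ)
    (hu0 : ∀ P α, u0 P α = C (a * P) - (1 - α) * C (b * P) - γ * P)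
    (hu1 : ∀ P α, u1 P α = α * (C (c * P1max / (1 + a * P)) - β)) :
    (∀ P : ℝ, 0 ≤ P → u0 P 0 ≤ u0 0 0) ∧
    (∀ α ∈ Set.Icc (0:ℝ) 1, u1 0 α ≤ u1 0 0) ∧
    u0 0 0 = 0 ∧ u1 0 0 = 0 := by
  have h00 : u0 0 0 = 0 := by rw [hu0]; simp [C_zero]
  have h10 : u1 0 0 = 0 := by rw [hu1]; simp
  refine ⟨?_, ?_, h00, h10⟩
  · intro P hP
    rw [hu0, h00]
    have hC : C (a * P) ≤ C (b * P) :=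
      C_mono (by positivity) (by nlinarith)
    have : 0 ≤ γ * P := by positivity
    linarith
  · intro α hα
    rw [hu1, h10]
    have : C (c * P1max / (1 + a * 0)) - β < 0 := by
      simpa using sub_neg.mpr hQneg
    nlinarith [hα.1]
end

section
/- For fixed b̄ > 0, the map P ↦ e^{1/(b̄P)}·E₁(1/(b̄P)) is strictly increasing and concave on (0, ∞), with limit 0 as P → 0⁺. -/
open MeasureTheory Real Set

noncomputable def E1 (x : ℝ) : ℝ := ∫ t in Set.Ioi x, Real.exp (-t) / t

lemma exp_int : IntegrableOn (fun s => Real.exp (-s)) (Set.Ioi (0:ℝ)) := by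
  simpa using exp_neg_integrableOn_Ioi 0 one_pos

lemma aux_int (x : ℝ) (hx : 0 < x) :
    IntegrableOn (fun s => Real.exp (-s) / (s + x)) (Set.Ioi (0:ℝ)) := by
  apply Integrable.mono (exp_int.mul_const (1/x))
  · exact ((Real.measurable_exp.comp measurable_neg).div
      (measurable_id.add_const x)).aestronglyMeasurable
  · filter_upwards [ae_restrict_mem measurableSet_Ioi] with s hs
    have hs' : (0:ℝ) < s := hs
    have h1 : 0 < s + x := by linarith
    rw [Real.norm_eq_abs, Real.norm_eq_abs, abs_of_nonneg (by positivity),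
      abs_of_nonneg (by positivity), mul_one_div]
    gcongr
    linarith

lemma shift_int (x : ℝ) :
    ∫ s in Set.Ioi (0:ℝ), Real.exp (-(s+x)) / (s+x) = ∫ t in Set.Ioi x, Real.exp (-t) / t := by
  have h := (measurePreserving_add_right (volume : Measure ℝ) x).setIntegral_preimage_emb
    (MeasurableEquiv.addRight x).measurableEmbedding (fun t => Real.exp (-t) / t) (Set.Ioi x)
  have hp : (fun s : ℝ => s + x) ⁻¹' Set.Ioi x = Set.Ioi 0 := by
    rw [preimage_add_const_Ioi]; simp
  simpa [MeasurableEquiv.addRight, hp] using h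

lemma key_repr (x : ℝ) (hx : 0 < x) :
    Real.exp x * E1 x = ∫ s in Set.Ioi (0:ℝ), Real.exp (-s) / (s + x) := by
  rw [E1, ← shift_int x, ← integral_const_mul]
  apply setIntegral_congr_fun measurableSet_Ioi
  intro s hs
  simp only []
  rw [mul_div_assoc', ← Real.exp_add]
  ring_nf

lemma conc_pt (s : ℝ) (hs : 0 ≤ s) {x y a b : ℝ} (hx : 0 < x) (hy : 0 < y)
    (ha : 0 ≤ a) (hb : 0 ≤ b) (hab : a + b = 1) :
    a * (x / (1 + s * x)) + b * (y / (1 + s * y))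
      ≤ (a * x + b * y) / (1 + s * (a * x + b * y)) := by
  have h1 : 0 < 1 + s * x := by nlinarith
  have h2 : 0 < 1 + s * y := by nlinarith
  have h3 : 0 < 1 + s * (a * x + b * y) := by nlinarith [mul_nonneg ha hx.le, mul_nonneg hb hy.le]
  rw [mul_div_assoc', mul_div_assoc', div_add_div _ _ (ne_of_gt h1) (ne_of_gt h2),
    div_le_div_iff₀ (by positivity) h3]
  have hb2 : b = 1 - a := by linarith
  subst hb2
  nlinarith [mul_nonneg (mul_nonneg (mul_nonneg hs ha) hb) (sq_nonneg (x - y))]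

lemma repr2 (bbar : ℝ) (hb : 0 < bbar) (P : ℝ) (hP : 0 < P) :
    Real.exp (1 / (bbar * P)) * E1 (1 / (bbar * P))
      = ∫ s in Set.Ioi (0:ℝ), Real.exp (-s) * (bbar * P / (1 + s * (bbar * P))) := by
  rw [key_repr _ (by positivity)]
  apply setIntegral_congr_fun measurableSet_Ioi
  intro s hs
  have hs' : (0:ℝ) < s := hs
  have h1 : bbar * P ≠ 0 := by positivity
  have h2 : s + 1 / (bbar * P) ≠ 0 := by positivity
  have h3 : 1 + s * (bbar * P) ≠ 0 := by positivity
  field_simp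
  ring

lemma int2 (bbar : ℝ) (hb : 0 < bbar) (P : ℝ) (hP : 0 < P) :
    IntegrableOn (fun s => Real.exp (-s) * (bbar * P / (1 + s * (bbar * P))))
      (Set.Ioi (0:ℝ)) := by
  apply (aux_int (1/(bbar*P)) (by positivity)).congr_fun _ measurableSet_Ioi
  intro s hs
  have hs' : (0:ℝ) < s := hs
  have h1 : bbar * P ≠ 0 := by positivity
  have h2 : s + 1 / (bbar * P) ≠ 0 := by positivity
  have h3 : 1 + s * (bbar * P) ≠ 0 := by positivity
  field_simp
  ring

theorem stmt18 (bbar : ℝ) (hb : 0 < bbar) :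
    StrictMonoOn (fun P => Real.exp (1 / (bbar * P)) * E1 (1 / (bbar * P))) (Set.Ioi (0:ℝ)) ∧
    ConcaveOn ℝ (Set.Ioi (0:ℝ))
      (fun P => Real.exp (1 / (bbar * P)) * E1 (1 / (bbar * P))) ∧
    Filter.Tendsto (fun P => Real.exp (1 / (bbar * P)) * E1 (1 / (bbar * P)))
      (nhdsWithin 0 (Set.Ioi 0)) (nhds 0) := by
  refine ⟨?_, ?_, ?_⟩
  · -- strict mono
    intro P hP Q hQ hPQ
    have hP' : (0:ℝ) < P := hP
    have hQ' : (0:ℝ) < Q := hQ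
    have hxP : (0:ℝ) < 1/(bbar*P) := by positivity
    have hxQ : (0:ℝ) < 1/(bbar*Q) := by positivity
    have hlt : 1/(bbar*Q) < 1/(bbar*P) := by
      apply one_div_lt_one_div_of_lt (by positivity)
      exact mul_lt_mul_of_pos_left hPQ hb
    have hintP := aux_int _ hxP
    have hintQ := aux_int _ hxQ
    simp only
    rw [key_repr _ hxP, key_repr _ hxQ, ← sub_pos, ← integral_sub hintQ hintP]
    have hpos : ∀ s ∈ Set.Ioi (0:ℝ),
        0 < Real.exp (-s) / (s + 1/(bbar*Q)) - Real.exp (-s) / (s + 1/(bbar*P)) := by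
      intro s hs
      have hs' : (0:ℝ) < s := hs
      have := div_lt_div_of_pos_left (Real.exp_pos (-s)) (by linarith : 0 < s + 1/(bbar*Q))
        (by linarith : s + 1/(bbar*Q) < s + 1/(bbar*P))
      linarith
    refine (setIntegral_pos_iff_support_of_nonneg_ae ?_ ?_).mpr ?_
    · filter_upwards [ae_restrict_mem measurableSet_Ioi] with s hs
      exact (hpos s hs).le
    · exact hintQ.sub hintP
    · refine lt_of_lt_of_le ?_ (measure_mono (Set.subset_inter (fun s hs => ?_) le_rfl))
      · rw [Real.volume_Ioi]; exact ENNReal.zero_lt_top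
      · exact ne_of_gt (hpos s hs)
  · -- concave
    refine ⟨convex_Ioi 0, ?_⟩
    intro P hP Q hQ a c ha hc hac
    have hP' : (0:ℝ) < P := hP
    have hQ' : (0:ℝ) < Q := hQ
    have hR' : (0:ℝ) < a * P + c * Q := by
      rcases ha.eq_or_lt with h | h
      · have hc1 : c = 1 := by linarith
        rw [← h, hc1]; simpa using hQ'
      · have : 0 ≤ c * Q := mul_nonneg hc hQ'.le
        nlinarith
    simp only [smul_eq_mul]
    rw [repr2 bbar hb P hP', repr2 bbar hb Q hQ', repr2 bbar hb _ hR',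
      ← integral_const_mul, ← integral_const_mul,
      ← integral_add ((int2 bbar hb P hP').const_mul a) ((int2 bbar hb Q hQ').const_mul c)]
    apply setIntegral_mono_on
      (((int2 bbar hb P hP').const_mul a).add ((int2 bbar hb Q hQ').const_mul c))
      (int2 bbar hb _ hR') measurableSet_Ioi
    intro s hs
    have hs' : (0:ℝ) < s := hs
    have key := conc_pt s hs'.le (mul_pos hb hP') (mul_pos hb hQ') ha hc hac
    have he : bbar * (a * P + c * Q) = a * (bbar * P) + c * (bbar * Q) := by ring
    calc a * (Real.exp (-s) * (bbar * P / (1 + s * (bbar * P))))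
          + c * (Real.exp (-s) * (bbar * Q / (1 + s * (bbar * Q))))
        = Real.exp (-s) * (a * (bbar * P / (1 + s * (bbar * P)))
            + c * (bbar * Q / (1 + s * (bbar * Q)))) := by ring
      _ ≤ Real.exp (-s) * ((a * (bbar * P) + c * (bbar * Q))
            / (1 + s * (a * (bbar * P) + c * (bbar * Q)))) :=
        mul_le_mul_of_nonneg_left key (Real.exp_pos (-s)).le
      _ = Real.exp (-s) * (bbar * (a * P + c * Q) / (1 + s * (bbar * (a * P + c * Q)))) := by
        rw [he]
  · -- limit
    have hbound : ∀ P ∈ Set.Ioi (0:ℝ),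
        Real.exp (1 / (bbar * P)) * E1 (1 / (bbar * P)) ≤ bbar * P := by
      intro P hP
      have hP' : (0:ℝ) < P := hP
      have hx : (0:ℝ) < 1/(bbar*P) := by positivity
      rw [key_repr _ hx]
      have step : ∫ s in Set.Ioi (0:ℝ), Real.exp (-s) / (s + 1/(bbar*P))
          ≤ ∫ s in Set.Ioi (0:ℝ), Real.exp (-s) * (bbar * P) := by
        apply setIntegral_mono_on (aux_int _ hx) (exp_int.mul_const _) measurableSet_Ioi
        intro s hs
        have hs' : (0:ℝ) < s := hs
        rw [div_le_iff₀ (by positivity)]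
        have h1 : (1:ℝ) ≤ (s + 1/(bbar*P)) * (bbar * P) := by
          rw [add_mul, one_div, inv_mul_cancel₀ (by positivity : bbar * P ≠ 0)]
          nlinarith [mul_pos hs' (mul_pos hb hP')]
        calc Real.exp (-s) = Real.exp (-s) * 1 := by ring
          _ ≤ Real.exp (-s) * ((s + 1/(bbar*P)) * (bbar * P)) :=
            mul_le_mul_of_nonneg_left h1 (Real.exp_pos (-s)).le
          _ = Real.exp (-s) * (bbar * P) * (s + 1/(bbar*P)) := by ring
      calc (∫ s in Set.Ioi (0:ℝ), Real.exp (-s) / (s + 1/(bbar*P)))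
          ≤ ∫ s in Set.Ioi (0:ℝ), Real.exp (-s) * (bbar * P) := step
        _ = (∫ s in Set.Ioi (0:ℝ), Real.exp (-s)) * (bbar * P) := by
            rw [integral_mul_const]
        _ = bbar * P := by rw [integral_exp_neg_Ioi_zero, one_mul]
    have hnonneg : ∀ P ∈ Set.Ioi (0:ℝ),
        0 ≤ Real.exp (1 / (bbar * P)) * E1 (1 / (bbar * P)) := by
      intro P hP
      have hP' : (0:ℝ) < P := hP
      have hx : (0:ℝ) < 1/(bbar*P) := by positivity
      rw [key_repr _ hx]
      apply setIntegral_nonneg measurableSet_Ioi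
      intro s hs
      have hs' : (0:ℝ) < s := hs
      positivity
    have hup : Filter.Tendsto (fun P => bbar * P) (nhdsWithin 0 (Set.Ioi 0)) (nhds 0) := by
      have : Filter.Tendsto (fun P => bbar * P) (nhds 0) (nhds (bbar * 0)) :=
        (continuous_const.mul continuous_id).tendsto 0
      simpa using this.mono_left nhdsWithin_le_nhds
    refine tendsto_of_tendsto_of_tendsto_of_le_of_le' tendsto_const_nhds hup ?_ ?_
    · exact Filter.eventually_of_mem self_mem_nhdsWithin (fun P hP => hnonneg P hP)
    · exact Filter.eventually_of_mem self_mem_nhdsWithin (fun P hP => hbound P hP)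
end
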